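/- Finite-dimensional ratio bound at a Rényi entropy maximizer. Let n ≥ 1, α ∈ (0,1), δ > 0, and let K be a convex subset of the probability simplex Δ^n = {d ∈ ℝ^n : d_i ≥ 0, Σ_i d_i = 1}. Suppose z ∈ K maximizes the Rényi entropy H_α over K and z_i > 0 for all i. Then for every x ∈ K with x_1 ≥ δ, one has x_1 / z_1 ≤ n / δ^{α/(1−α)}, i.e., z_1 ≥ (δ^{α/(1−α)} / n) · x_1. -/

import Mathlib

open Finset

/-- **Finite-dimensional ratio bound at a Rényi entropy maximizer.**
If `z` maximizes the Rényi entropy `H_α` (with `α ∈ (0,1)`) over a convex subset `K`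
of the probability simplex `Δ^n`, `z` has full support, and `x ∈ K` has first
coordinate `x 0 ≥ δ > 0`, then `x 0 / z 0 ≤ n / δ ^ (α/(1-α))`. -/
theorem renyi_maximizer_ratio_bound
    (n : ℕ) (hn : 1 ≤ n) (α : ℝ) (hα : α ∈ Set.Ioo (0 : ℝ) 1) (δ : ℝ) (hδ : 0 < δ)
    (K : Set (Fin n → ℝ)) (hK : Convex ℝ K) (hKsub : K ⊆ stdSimplex ℝ (Fin n))
    (z : Fin n → ℝ) (hz : z ∈ K) (hzpos : ∀ i, 0 < z i)
    (hmax : ∀ x ∈ K,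
      (1 / (1 - α)) * Real.log (∑ i, x i ^ α) ≤ (1 / (1 - α)) * Real.log (∑ i, z i ^ α)) :
    ∀ x ∈ K, δ ≤ x ⟨0, hn⟩ →
      x ⟨0, hn⟩ / z ⟨0, hn⟩ ≤ (n : ℝ) / δ ^ (α / (1 - α)) := by
  obtain ⟨hα0, hα1⟩ := hα
  have h1α : 0 < 1 - α := by linarith
  have hnpos : (0 : ℝ) < n := by exact_mod_cast hn
  intro x hx hδx
  set i0 : Fin n := ⟨0, hn⟩
  have hz0 : 0 < z i0 := hzpos i0
  have hxnn : ∀ i, 0 ≤ x i := (hKsub hx).1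
  -- F(d) ≤ F(z) for all d ∈ K
  have hFle : ∀ d ∈ K, (∑ i, d i ^ α) ≤ ∑ i, z i ^ α := by
    intro d hd
    have hSpos : ∀ w ∈ K, (0 : ℝ) < ∑ i, w i ^ α := by
      intro w hw
      obtain ⟨i, hi⟩ : ∃ i, 0 < w i := by
        by_contra h
        push_neg at h
        have : (∑ i, w i) ≤ 0 := Finset.sum_nonpos fun i _ => h i
        rw [(hKsub hw).2] at this; linarith
      have h1 : (0:ℝ) < w i ^ α := Real.rpow_pos_of_pos hi α
      have h2 : w i ^ α ≤ ∑ j, w j ^ α :=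
        Finset.single_le_sum (fun j _ => Real.rpow_nonneg ((hKsub hw).1 j) α)
          (Finset.mem_univ i)
      linarith
    have h := hmax d hd
    have hc : (0:ℝ) < 1/(1-α) := by positivity
    have hlog : Real.log (∑ i, d i ^ α) ≤ Real.log (∑ i, z i ^ α) :=
      le_of_mul_le_mul_left (by linarith [h]) hc
    exact (Real.log_le_log_iff (hSpos d hd) (hSpos z hz)).mp hlog
  -- Gradient inequality: ∑ x i * z i ^ (α-1) ≤ ∑ z i ^ α
  have hgrad : (∑ i, x i * z i ^ (α - 1)) ≤ ∑ i, z i ^ α := by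
    set c : Fin n → ℝ := fun i => x i - z i with hc
    set g : ℝ → ℝ := fun t => ∑ i, (z i + c i * t) ^ α with hg
    have hderiv : HasDerivAt g (∑ i, c i * α * z i ^ (α - 1)) 0 := by
      apply HasDerivAt.fun_sum
      intro i _
      have h1 : HasDerivAt (fun t : ℝ => z i + c i * t) (c i) 0 := by
        simpa using ((hasDerivAt_id (0:ℝ)).const_mul (c i)).const_add (z i)
      have := h1.rpow_const (p := α) (by left; simpa using (hzpos i).ne')
      simpa using this
    rw [hasDerivAt_iff_tendsto_slope] at hderiv
    have hderiv' : Filter.Tendsto (slope g 0) (nhdsWithin 0 (Set.Ioi 0))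
        (nhds (∑ i, c i * α * z i ^ (α - 1))) :=
      hderiv.mono_left (nhdsWithin_mono 0 (fun t ht => ne_of_gt ht))
    have hle : (∑ i, c i * α * z i ^ (α - 1)) ≤ 0 := by
      refine le_of_tendsto hderiv' ?_
      filter_upwards [Ioc_mem_nhdsGT_of_mem (by norm_num : (0:ℝ) ∈ Set.Ico 0 1)]
        with t ht
      have ht0 : 0 < t := ht.1
      have hmem : ((1 - t) • z + t • x) ∈ K :=
        hK hz hx (by linarith [ht.2]) ht0.le (by ring)
      have hgt : g t ≤ g 0 := by
        have h1 : g t = ∑ i, ((1 - t) • z + t • x) i ^ α := by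
          apply Finset.sum_congr rfl
          intro i _
          congr 1
          simp [hc, smul_eq_mul]
          ring
        have h2 : g 0 = ∑ i, z i ^ α := by
          simp [hg]
        rw [h1, h2]
        exact hFle _ hmem
      rw [slope_def_field]
      simp only [sub_zero]
      exact div_nonpos_of_nonpos_of_nonneg (by linarith) ht0.le
    have hsum : (∑ i, c i * α * z i ^ (α - 1))
        = α * ((∑ i, x i * z i ^ (α - 1)) - ∑ i, z i ^ α) := by
      rw [← Finset.sum_sub_distrib, Finset.mul_sum]
      apply Finset.sum_congr rfl
      intro i _
      have : z i ^ α = z i ^ (α - 1) * z i := by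
        rw [← Real.rpow_add_one (hzpos i).ne' (α - 1)]
        ring_nf
      rw [this, hc]
      ring
    rw [hsum] at hle
    nlinarith [hle, hα0]
  -- Bound: ∑ z i ^ α ≤ n ^ (1 - α)
  have hB : (∑ i, z i ^ α) ≤ (n : ℝ) ^ (1 - α) := by
    have hjensen := (Real.concaveOn_rpow hα0.le hα1.le).le_map_sum
      (t := Finset.univ) (w := fun _ : Fin n => (n : ℝ)⁻¹) (p := z)
      (fun i _ => by positivity)
      (by simp [Finset.card_univ]; field_simp)
      (fun i _ => (hzpos i).le)
    have hzsum : (∑ i, (n:ℝ)⁻¹ • z i) = (n:ℝ)⁻¹ := by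
      rw [← Finset.smul_sum, (hKsub hz).2, smul_eq_mul, mul_one]
    rw [hzsum] at hjensen
    simp only [smul_eq_mul] at hjensen
    rw [← Finset.mul_sum] at hjensen
    have h2 : (∑ i, z i ^ α) ≤ (n:ℝ) * (n:ℝ)⁻¹ ^ α := by
      calc (∑ i, z i ^ α) = (n:ℝ) * ((n:ℝ)⁻¹ * ∑ i, z i ^ α) := by
            field_simp
        _ ≤ (n:ℝ) * (n:ℝ)⁻¹ ^ α := by
            exact mul_le_mul_of_nonneg_left hjensen hnpos.le
    calc (∑ i, z i ^ α) ≤ (n:ℝ) * (n:ℝ)⁻¹ ^ α := h2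
      _ = (n : ℝ) ^ (1 - α) := by
          rw [Real.rpow_sub hnpos, Real.rpow_one, Real.inv_rpow hnpos.le]
          field_simp
  -- Combine
  have hkey : x i0 * z i0 ^ (α - 1) ≤ (n : ℝ) ^ (1 - α) := by
    refine le_trans ?_ (le_trans hgrad hB)
    exact Finset.single_le_sum
      (f := fun i => x i * z i ^ (α - 1))
      (fun i _ => mul_nonneg (hxnn i) (Real.rpow_nonneg (hzpos i).le _))
      (Finset.mem_univ i0)
  set β := α / (1 - α) with hβ
  have hβ0 : 0 ≤ β := by positivity
  -- z i0 ^ (1-α) ≥ δ / n^(1-α)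
  have hzl : δ / (n:ℝ) ^ (1 - α) ≤ z i0 ^ (1 - α) := by
    have h1 : δ * z i0 ^ (α - 1) ≤ (n:ℝ) ^ (1 - α) :=
      le_trans (mul_le_mul_of_nonneg_right hδx (Real.rpow_nonneg hz0.le _)) hkey
    have h2 : z i0 ^ (α - 1) = (z i0 ^ (1 - α))⁻¹ := by
      rw [← Real.rpow_neg hz0.le]
      ring_nf
    rw [h2] at h1
    have h3 : 0 < z i0 ^ (1 - α) := Real.rpow_pos_of_pos hz0 _
    rw [div_le_iff₀ (by positivity)]
    calc δ = δ * (z i0 ^ (1-α))⁻¹ * z i0 ^ (1-α) := by field_simp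
      _ ≤ (n:ℝ) ^ (1-α) * z i0 ^ (1-α) := mul_le_mul_of_nonneg_right h1 h3.le
      _ = z i0 ^ (1-α) * (n:ℝ) ^ (1-α) := by ring
  -- z i0 ^ α ≥ δ^β / n^α
  have hzα : δ ^ β / (n:ℝ) ^ α ≤ z i0 ^ α := by
    have h := Real.rpow_le_rpow (by positivity) hzl hβ0
    have e1 : (z i0 ^ (1 - α)) ^ β = z i0 ^ α := by
      rw [← Real.rpow_mul hz0.le]
      rw [hβ]
      field_simp
    have e2 : (δ / (n:ℝ) ^ (1 - α)) ^ β = δ ^ β / (n:ℝ) ^ α := by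
      rw [Real.div_rpow hδ.le (by positivity), ← Real.rpow_mul hnpos.le]
      congr 2
      rw [hβ]
      field_simp
    rw [e1, e2] at h
    exact h
  have hfrac : x i0 / z i0 ≤ (n:ℝ) ^ (1 - α) / z i0 ^ α := by
    rw [div_le_div_iff₀ hz0 (Real.rpow_pos_of_pos hz0 α)]
    calc x i0 * z i0 ^ α = x i0 * z i0 ^ (α - 1) * z i0 := by
          rw [mul_assoc, ← Real.rpow_add_one hz0.ne']
          ring_nf
      _ ≤ (n:ℝ) ^ (1 - α) * z i0 := mul_le_mul_of_nonneg_right hkey hz0.le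
  calc x i0 / z i0 ≤ (n:ℝ) ^ (1 - α) / z i0 ^ α := hfrac
    _ ≤ (n:ℝ) ^ (1 - α) / (δ ^ β / (n:ℝ) ^ α) := by
        gcongr <;> positivity
    _ = (n:ℝ) / δ ^ β := by
        rw [div_div_eq_mul_div, ← Real.rpow_add hnpos]
        norm_num
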